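/- arXiv:2406.10055 — 3 statements merged into one kernel-verified Lean document; each statement's English description precedes it below -/
import Mathlib

section
/- Let x₁, x₂, x₃, x₄ be the vertices of a strictly convex quadrilateral in ℝ² (i.e., the four points are in convex position, no three collinear, listed in cyclic order). Suppose there exists an isometry χ of ℝ² with χ(x₁) = x₃, χ(x₂) = x₄, χ(x₃) = x₁, and χ(x₄) = x₂. Then χ is the point reflection through the midpoint of the segment [x₁, x₃]; in particular, the midpoints of [x₁,x₃] and [x₂,x₄] coincide. -/
open RealInnerProductSpace

/-- A combinatorial central symmetry of a strictly convex quadrilateral is the point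
reflection through the midpoint of a diagonal; in particular the two diagonals have
the same midpoint. -/
theorem stmt_2 (x₁ x₂ x₃ x₄ : EuclideanSpace ℝ (Fin 2))
    -- the four points are in strictly convex position: each is outside the convex hull
    -- of the other three
    (hextr₁ : x₁ ∉ convexHull ℝ {x₂, x₃, x₄})
    (hextr₂ : x₂ ∉ convexHull ℝ {x₁, x₃, x₄})
    (hextr₃ : x₃ ∉ convexHull ℝ {x₁, x₂, x₄})
    (hextr₄ : x₄ ∉ convexHull ℝ {x₁, x₂, x₃})
    -- listed in cyclic order: the diagonals [x₁,x₃] and [x₂,x₄] meet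
    (hcyc : (segment ℝ x₁ x₃ ∩ segment ℝ x₂ x₄).Nonempty)
    (χ : EuclideanSpace ℝ (Fin 2) ≃ᵢ EuclideanSpace ℝ (Fin 2))
    (h₁ : χ x₁ = x₃) (h₂ : χ x₂ = x₄) (h₃ : χ x₃ = x₁) (h₄ : χ x₄ = x₂) :
    (∀ x, χ x = (2 : ℝ) • midpoint ℝ x₁ x₃ - x) ∧
      midpoint ℝ x₁ x₃ = midpoint ℝ x₂ x₄ := by
  classical
  have hne13 : x₁ ≠ x₃ := by
    intro h
    exact hextr₁ (subset_convexHull ℝ _ (by rw [h]; simp))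
  have hcol : ¬ Collinear ℝ ({x₁, x₂, x₃} : Set (EuclideanSpace ℝ (Fin 2))) := by
    intro h
    rcases h.wbtw_or_wbtw_or_wbtw with hw | hw | hw
    · exact hextr₂ (segment_subset_convexHull (by simp) (by simp) hw.mem_segment)
    · exact hextr₃ (segment_subset_convexHull (by simp) (by simp) hw.mem_segment)
    · exact hextr₁ (segment_subset_convexHull (by simp) (by simp) hw.mem_segment)
  set m₁ := midpoint ℝ x₁ x₃ with hm₁def
  set m₂ := midpoint ℝ x₂ x₄ with hm₂def
  set f := χ.toRealAffineIsometryEquiv with hfdef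
  set L := f.linearIsometryEquiv with hLdef
  have hfx : ∀ x, f x = χ x := fun x => congrFun χ.coeFn_toRealAffineIsometryEquiv x
  have key : ∀ x, χ x = L (x - m₁) + χ m₁ := by
    intro x
    have h := f.map_vadd m₁ (x - m₁)
    simp only [vadd_eq_add, hfx] at h
    have e : x - m₁ + m₁ = x := by abel
    rw [e] at h
    exact h
  have hχm₁ : χ m₁ = m₁ := by
    rw [hm₁def, χ.map_midpoint, h₁, h₃, midpoint_comm]
  have hχm₂ : χ m₂ = m₂ := by
    rw [hm₂def, χ.map_midpoint, h₂, h₄, midpoint_comm]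
  have hmadd₁ : m₁ + m₁ = x₁ + x₃ := midpoint_add_self ℝ x₁ x₃
  have hmadd₂ : m₂ + m₂ = x₂ + x₄ := midpoint_add_self ℝ x₂ x₄
  have hv : L (x₁ - m₁) = -(x₁ - m₁) := by
    have h := key x₁
    rw [h₁, hχm₁] at h
    linear_combination (norm := module) -h - hmadd₁
  have hwfix : L (m₂ - m₁) = m₂ - m₁ := by
    have hb := key m₂
    rw [hχm₂, hχm₁] at hb
    linear_combination (norm := module) -hb
  have hu : L (x₂ - m₂) = -(x₂ - m₂) := by
    have ha := key x₂
    rw [h₂, hχm₁] at ha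
    have hb := key m₂
    rw [hχm₂, hχm₁] at hb
    have hcsub : L (x₂ - m₂) = L (x₂ - m₁) - L (m₂ - m₁) := by
      rw [← LinearIsometryEquiv.map_sub]
      congr 1
      abel
    rw [hcsub]
    linear_combination (norm := module) -ha + hb - hmadd₂
  have o₁ : ⟪x₁ - m₁, m₂ - m₁⟫ = 0 := by
    have h := L.inner_map_map (x₁ - m₁) (m₂ - m₁)
    rw [hv, hwfix, inner_neg_left] at h
    linarith
  have o₂ : ⟪x₂ - m₂, m₂ - m₁⟫ = 0 := by
    have h := L.inner_map_map (x₂ - m₂) (m₂ - m₁)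
    rw [hu, hwfix, inner_neg_left] at h
    linarith
  have hvne : x₁ - m₁ ≠ 0 := by
    intro h
    apply hne13
    have h' : x₁ = m₁ := sub_eq_zero.mp h
    have h2 := hmadd₁
    rw [← h'] at h2
    exact add_left_cancel h2
  have hmeq : m₂ = m₁ := by
    by_contra hne
    apply hcol
    have hwne : m₂ - m₁ ≠ 0 := sub_ne_zero.mpr hne
    have o₁' : (x₁ - m₁) 0 * (m₂ - m₁) 0 + (x₁ - m₁) 1 * (m₂ - m₁) 1 = 0 := by
      simpa [PiLp.inner_apply, Fin.sum_univ_two, RCLike.inner_apply, conj_trivial, mul_comm] using o₁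
    have o₂' : (x₂ - m₂) 0 * (m₂ - m₁) 0 + (x₂ - m₂) 1 * (m₂ - m₁) 1 = 0 := by
      simpa [PiLp.inner_apply, Fin.sum_univ_two, RCLike.inner_apply, conj_trivial, mul_comm] using o₂
    have subc : ∀ (a b : EuclideanSpace ℝ (Fin 2)) (i : Fin 2), (a - b) i = a i - b i :=
      fun _ _ _ => rfl
    simp only [subc] at o₁' o₂'
    have hw01 : m₂ 0 - m₁ 0 ≠ 0 ∨ m₂ 1 - m₁ 1 ≠ 0 := by
      by_contra hcon
      push_neg at hcon
      apply hwne
      ext i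
      fin_cases i
      · show m₂ 0 - m₁ 0 = 0
        exact hcon.1
      · show m₂ 1 - m₁ 1 = 0
        exact hcon.2
    have hdet : (x₁ 0 - m₁ 0) * (x₂ 1 - m₂ 1) - (x₁ 1 - m₁ 1) * (x₂ 0 - m₂ 0) = 0 := by
      rcases hw01 with h | h
      · have hz : ((x₁ 0 - m₁ 0) * (x₂ 1 - m₂ 1) - (x₁ 1 - m₁ 1) * (x₂ 0 - m₂ 0)) *
            (m₂ 0 - m₁ 0) = 0 := by
          linear_combination (x₂ 1 - m₂ 1) * o₁' - (x₁ 1 - m₁ 1) * o₂'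
        exact (mul_eq_zero.mp hz).resolve_right h
      · have hz : ((x₁ 0 - m₁ 0) * (x₂ 1 - m₂ 1) - (x₁ 1 - m₁ 1) * (x₂ 0 - m₂ 0)) *
            (m₂ 1 - m₁ 1) = 0 := by
          linear_combination (x₁ 0 - m₁ 0) * o₂' - (x₂ 0 - m₂ 0) * o₁'
        exact (mul_eq_zero.mp hz).resolve_right h
    have hv01 : x₁ 0 - m₁ 0 ≠ 0 ∨ x₁ 1 - m₁ 1 ≠ 0 := by
      by_contra hcon
      push_neg at hcon
      apply hvne
      ext i
      fin_cases i
      · show x₁ 0 - m₁ 0 = 0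
        exact hcon.1
      · show x₁ 1 - m₁ 1 = 0
        exact hcon.2
    obtain ⟨c, hc⟩ : ∃ c : ℝ, x₂ - m₂ = c • (x₁ - m₁) := by
      rcases hv01 with h | h
      · refine ⟨(x₂ 0 - m₂ 0) / (x₁ 0 - m₁ 0), ?_⟩
        ext i
        fin_cases i
        · show x₂ 0 - m₂ 0 = ((x₂ 0 - m₂ 0) / (x₁ 0 - m₁ 0)) * (x₁ 0 - m₁ 0)
          field_simp
        · show x₂ 1 - m₂ 1 = ((x₂ 0 - m₂ 0) / (x₁ 0 - m₁ 0)) * (x₁ 1 - m₁ 1)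
          field_simp
          linear_combination hdet
      · refine ⟨(x₂ 1 - m₂ 1) / (x₁ 1 - m₁ 1), ?_⟩
        ext i
        fin_cases i
        · show x₂ 0 - m₂ 0 = ((x₂ 1 - m₂ 1) / (x₁ 1 - m₁ 1)) * (x₁ 0 - m₁ 0)
          field_simp
          linear_combination -hdet
        · show x₂ 1 - m₂ 1 = ((x₂ 1 - m₂ 1) / (x₁ 1 - m₁ 1)) * (x₁ 1 - m₁ 1)
          field_simp
    obtain ⟨p, hp13, hp24⟩ := hcyc
    obtain ⟨a1, b1, ha1, hb1, hab1, hs1⟩ := hp13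
    obtain ⟨a2, b2, ha2, hb2, hab2, hs2⟩ := hp24
    have h12 : a1 • x₁ + b1 • x₃ = a2 • x₂ + b2 • x₄ := hs1.trans hs2.symm
    have ea1 : a1 = 1 - b1 := by linarith
    have ea2 : a2 = 1 - b2 := by linarith
    rw [ea1, ea2] at h12
    rw [collinear_iff_of_mem (Set.mem_insert x₁ _)]
    refine ⟨x₁ - m₁, fun q hq => ?_⟩
    simp only [Set.mem_insert_iff, Set.mem_singleton_iff] at hq
    rcases hq with h | h | h
    · exact ⟨0, by rw [h]; simp⟩
    · refine ⟨2 * b2 * c - 2 * b1, ?_⟩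
      rw [h]
      show x₂ = (2 * b2 * c - 2 * b1) • (x₁ - m₁) + x₁
      linear_combination (norm := module) (-1 : ℝ) • h12 + (-b1) • hmadd₁ + b2 • hmadd₂ +
        (2 * b2) • hc
    · refine ⟨-2, ?_⟩
      rw [h]
      show x₃ = (-2 : ℝ) • (x₁ - m₁) + x₁
      linear_combination (norm := module) -hmadd₁
  have hu' : L (x₂ - m₁) = -(x₂ - m₁) := by rw [← hmeq]; exact hu
  have hind : LinearIndependent ℝ ![x₁ - m₁, x₂ - m₁] := by
    rw [LinearIndependent.pair_iff' hvne]
    intro a ha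
    apply hcol
    rw [collinear_iff_of_mem (Set.mem_insert x₁ _)]
    refine ⟨x₁ - m₁, fun q hq => ?_⟩
    simp only [Set.mem_insert_iff, Set.mem_singleton_iff] at hq
    rcases hq with h | h | h
    · exact ⟨0, by rw [h]; simp⟩
    · refine ⟨a - 1, ?_⟩
      rw [h]
      show x₂ = (a - 1) • (x₁ - m₁) + x₁
      linear_combination (norm := module) -ha
    · refine ⟨-2, ?_⟩
      rw [h]
      show x₃ = (-2 : ℝ) • (x₁ - m₁) + x₁
      linear_combination (norm := module) -hmadd₁
  have hspan := hind.span_eq_top_of_card_eq_finrank (by simp)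
  have hLneg : ∀ y, L y = -y := by
    intro y
    have hy : y ∈ Submodule.span ℝ ({x₂ - m₁, x₁ - m₁} : Set (EuclideanSpace ℝ (Fin 2))) := by
      have hy' : y ∈ (⊤ : Submodule ℝ (EuclideanSpace ℝ (Fin 2))) := trivial
      rw [← hspan] at hy'
      simpa [Matrix.range_cons, Matrix.range_empty] using hy'
    obtain ⟨s, t, hst⟩ := Submodule.mem_span_pair.mp hy
    rw [← hst, map_add, map_smul, map_smul, hv, hu']
    module
  refine ⟨fun x => ?_, hmeq.symm⟩
  rw [key x, hχm₁, hLneg]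
  module
end

section
/- Let r, s > 0 and Ψ ∈ (0, π). Define cosh ε = cosh r · cosh s − sinh r · sinh s · cos Ψ (hyperbolic law of cosines) and sin Φ = sinh s · sin Ψ / sinh ε (hyperbolic law of sines). Define the corresponding Euclidean quantities with sides r' = tanh r, s' = tanh s and the same angle Ψ: (ε')² = r'² + s'² − 2 r' s' cos Ψ and sin Φ' = s' · sin Ψ / ε'. Then tan Φ' = tan Φ · cosh r. -/
open Real

/-- Comparison of a hyperbolic triangle with sides `r`, `s` enclosing angle `Ψ` and the
Euclidean triangle in the Beltrami–Klein model with sides `tanh r`, `tanh s` enclosing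
the same angle `Ψ`: the angles `Φ`, `Φ'` opposite the side `s` satisfy
`tan Φ' = tan Φ · cosh r`. -/
theorem stmt_5 (r s Ψ ε ε' Φ Φ' : ℝ)
    (hr : 0 < r) (hs : 0 < s) (hΨ : Ψ ∈ Set.Ioo 0 π)
    (hε : 0 < ε)
    (hcos : Real.cosh ε = Real.cosh r * Real.cosh s - Real.sinh r * Real.sinh s * cos Ψ)
    (hΦ : Φ ∈ Set.Ioo 0 (π / 2))
    (hsin : sin Φ = Real.sinh s * sin Ψ / Real.sinh ε)
    (hε' : 0 < ε')
    (hcos' : ε' ^ 2 = Real.tanh r ^ 2 + Real.tanh s ^ 2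
      - 2 * Real.tanh r * Real.tanh s * cos Ψ)
    (hΦ' : Φ' ∈ Set.Ioo 0 (π / 2))
    (hsin' : sin Φ' = Real.tanh s * sin Ψ / ε') :
    tan Φ' = tan Φ * Real.cosh r := by
  obtain ⟨hΨ0, hΨπ⟩ := hΨ
  obtain ⟨hΦ0, hΦπ⟩ := hΦ
  obtain ⟨hΦ'0, hΦ'π⟩ := hΦ'
  have hsinΨ : 0 < sin Ψ := sin_pos_of_pos_of_lt_pi hΨ0 hΨπ
  have hsε : 0 < Real.sinh ε := Real.sinh_pos_iff.2 hε
  have hcosΦ : 0 < cos Φ := cos_pos_of_mem_Ioo ⟨by linarith [pi_pos], hΦπ⟩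
  have hcosΦ' : 0 < cos Φ' := cos_pos_of_mem_Ioo ⟨by linarith [pi_pos], hΦ'π⟩
  have hCr : 0 < Real.cosh r := Real.cosh_pos _
  have hCs : 0 < Real.cosh s := Real.cosh_pos _
  set A := Real.sinh r * Real.cosh s - Real.cosh r * Real.sinh s * cos Ψ with hA
  set B := Real.tanh r - Real.tanh s * cos Ψ with hB
  have hBA : B * (Real.cosh r * Real.cosh s) = A := by
    rw [hB, hA, Real.tanh_eq_sinh_div_cosh, Real.tanh_eq_sinh_div_cosh]
    field_simp
  -- cos Φ * sinh ε = |A|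
  have hsq : (cos Φ * Real.sinh ε) ^ 2 = A ^ 2 := by
    have h1 : cos Φ ^ 2 = 1 - sin Φ ^ 2 := by linear_combination sin_sq_add_cos_sq Φ
    have h2 : sin Φ * Real.sinh ε = Real.sinh s * sin Ψ := by
      rw [hsin]; field_simp
    have h3 : Real.cosh ε ^ 2 - Real.sinh ε ^ 2 = 1 := Real.cosh_sq_sub_sinh_sq ε
    have h4 : Real.cosh r ^ 2 - Real.sinh r ^ 2 = 1 := Real.cosh_sq_sub_sinh_sq r
    have h5 : Real.cosh s ^ 2 - Real.sinh s ^ 2 = 1 := Real.cosh_sq_sub_sinh_sq s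
    have h6 : sin Ψ ^ 2 + cos Ψ ^ 2 = 1 := sin_sq_add_cos_sq Ψ
    have h7 : (cos Φ * Real.sinh ε) ^ 2
        = Real.sinh ε ^ 2 - (sin Φ * Real.sinh ε) ^ 2 := by
      rw [mul_pow, mul_pow, h1]; ring
    rw [h7, h2, hA]
    linear_combination (-1) * h3
      + (Real.cosh ε + Real.cosh r * Real.cosh s - Real.sinh r * Real.sinh s * cos Ψ) * hcos
      + (Real.cosh s ^ 2 - Real.sinh s ^ 2 * cos Ψ ^ 2) * h4 + h5
      - Real.sinh s ^ 2 * h6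
  have hcΦ : cos Φ * Real.sinh ε = |A| := by
    have h4 : |cos Φ * Real.sinh ε| = |A| := by
      rw [← Real.sqrt_sq_eq_abs, ← Real.sqrt_sq_eq_abs, hsq]
    rwa [abs_of_pos (mul_pos hcosΦ hsε)] at h4
  -- cos Φ' * ε' = |B|
  have hsq' : (cos Φ' * ε') ^ 2 = B ^ 2 := by
    have h1 : cos Φ' ^ 2 = 1 - sin Φ' ^ 2 := by linear_combination sin_sq_add_cos_sq Φ'
    have h2 : sin Φ' * ε' = Real.tanh s * sin Ψ := by
      rw [hsin']; field_simp
    have h7 : (cos Φ' * ε') ^ 2 = ε' ^ 2 - (sin Φ' * ε') ^ 2 := by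
      rw [mul_pow, mul_pow, h1]; ring
    have h6 : sin Ψ ^ 2 + cos Ψ ^ 2 = 1 := sin_sq_add_cos_sq Ψ
    rw [h7, h2, hcos', hB]
    linear_combination (- Real.tanh s ^ 2) * h6
  have hcΦ' : cos Φ' * ε' = |B| := by
    have h4 : |cos Φ' * ε'| = |B| := by
      rw [← Real.sqrt_sq_eq_abs, ← Real.sqrt_sq_eq_abs, hsq']
    rwa [abs_of_pos (mul_pos hcosΦ' hε')] at h4
  have hA0 : A ≠ 0 := by
    intro h
    rw [h, abs_zero] at hcΦ
    exact (mul_pos hcosΦ hsε).ne' hcΦ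
  have hAabs : |A| = |B| * (Real.cosh r * Real.cosh s) := by
    rw [← hBA, abs_mul, abs_of_pos (mul_pos hCr hCs)]
  have hB0 : |B| ≠ 0 := by
    intro h
    apply hA0
    rw [← hBA, abs_eq_zero.mp h, zero_mul]
  have hBpos : 0 < |B| := lt_of_le_of_ne (abs_nonneg B) (Ne.symm hB0)
  have hcosΦval : cos Φ = |A| / Real.sinh ε := by
    field_simp [hsε.ne'] at hcΦ ⊢; linarith
  have hcosΦ'val : cos Φ' = |B| / ε' := by
    field_simp [hε'.ne'] at hcΦ' ⊢; linarith
  rw [Real.tan_eq_sin_div_cos, Real.tan_eq_sin_div_cos, hsin, hsin', hcosΦval, hcosΦ'val,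
    hAabs, Real.tanh_eq_sinh_div_cosh]
  field_simp
end

section
/- Let S ⊆ ℝ² be a compact set with nonempty interior that is the intersection of two closed convex sets and whose boundary has exactly two non-smooth points p ≠ q (points where the boundary has two distinct supporting lines). If χ is a nontrivial isometry of ℝ² mapping S onto itself, then χ({p, q}) = {p, q}, and χ is one of: the point reflection through the midpoint of [p, q], the reflection across the line through p and q, or the reflection across the perpendicular bisector of [p, q]. -/
open RealInnerProductSpace

/-- A point `p` is a non-smooth boundary point of `S` if `S` has two distinct
supporting directions at `p`. -/
def NonSmoothPt (S : Set (EuclideanSpace ℝ (Fin 2))) (p : EuclideanSpace ℝ (Fin 2)) :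
    Prop :=
  p ∈ frontier S ∧ ∃ u v : EuclideanSpace ℝ (Fin 2), u ≠ v ∧ ‖u‖ = 1 ∧ ‖v‖ = 1 ∧
    (∀ y ∈ S, ⟪y, u⟫ ≤ ⟪p, u⟫) ∧ (∀ y ∈ S, ⟪y, v⟫ ≤ ⟪p, v⟫)

lemma aux_inner2 (x y : EuclideanSpace ℝ (Fin 2)) : ⟪x, y⟫ = x 0 * y 0 + x 1 * y 1 := by
  simp [PiLp.inner_apply, Fin.sum_univ_two, RCLike.inner_apply, mul_comm]

lemma aux_ne0 (u : EuclideanSpace ℝ (Fin 2)) (hu : u ≠ 0) : u 0 ^ 2 + u 1 ^ 2 > 0 := by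
  rcases eq_or_ne (u 0) 0 with h0 | h0
  · rcases eq_or_ne (u 1) 0 with h1 | h1
    · exfalso; apply hu; ext i; fin_cases i <;> simpa
    · positivity
  · positivity

lemma aux_perp_zero (u w x : EuclideanSpace ℝ (Fin 2)) (hu : u ≠ 0) (hw : w ≠ 0)
    (huw : ⟪u, w⟫ = 0) (hxu : ⟪x, u⟫ = 0) (hxw : ⟪x, w⟫ = 0) : x = 0 := by
  rw [aux_inner2] at huw hxu hxw
  have hu2 := aux_ne0 u hu
  have hw2 := aux_ne0 w hw
  have hd : (u 0 * w 1 - u 1 * w 0) ^ 2 = (u 0 ^ 2 + u 1 ^ 2) * (w 0 ^ 2 + w 1 ^ 2) - (u 0 * w 0 + u 1 * w 1) ^ 2 := by ring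
  have hd0 : u 0 * w 1 - u 1 * w 0 ≠ 0 := by
    intro h; rw [h] at hd; nlinarith
  have h0 : x 0 = 0 := by
    have : (u 0 * w 1 - u 1 * w 0) * x 0 = w 1 * (x 0 * u 0 + x 1 * u 1) - u 1 * (x 0 * w 0 + x 1 * w 1) := by ring
    rw [hxu, hxw] at this
    simp only [mul_zero, sub_zero, sub_self] at this
    exact (mul_eq_zero.1 this).resolve_left hd0
  have h1 : x 1 = 0 := by
    have : (u 0 * w 1 - u 1 * w 0) * x 1 = u 0 * (x 0 * w 0 + x 1 * w 1) - w 0 * (x 0 * u 0 + x 1 * u 1) := by ring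
    rw [hxu, hxw] at this
    simp only [mul_zero, sub_zero, sub_self] at this
    exact (mul_eq_zero.1 this).resolve_left hd0
  ext i; fin_cases i <;> simpa

lemma aux_decomp (u w x : EuclideanSpace ℝ (Fin 2)) (hu : u ≠ 0) (hw : w ≠ 0)
    (huw : ⟪u, w⟫ = 0) :
    x = (⟪x, u⟫ / ⟪u, u⟫) • u + (⟪x, w⟫ / ⟪w, w⟫) • w := by
  have huu : ⟪u, u⟫ ≠ 0 := by
    simpa using (inner_self_ne_zero (𝕜 := ℝ)).2 hu
  have hww : ⟪w, w⟫ ≠ 0 := by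
    simpa using (inner_self_ne_zero (𝕜 := ℝ)).2 hw
  have hwu : ⟪w, u⟫ = 0 := by rw [real_inner_comm]; exact huw
  have h := aux_perp_zero u w (x - ((⟪x, u⟫ / ⟪u, u⟫) • u + (⟪x, w⟫ / ⟪w, w⟫) • w)) hu hw huw ?_ ?_
  · linear_combination (norm := module) h
  · rw [inner_sub_left, inner_add_left, real_inner_smul_left, real_inner_smul_left, hwu,
      div_mul_cancel₀ _ huu]
    ring
  · rw [inner_sub_left, inner_add_left, real_inner_smul_left, real_inner_smul_left,
      huw, div_mul_cancel₀ _ hww]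
    ring

/-- A nontrivial self-isometry of a compact planar set with nonempty interior, equal to
an intersection of two closed convex sets and with exactly two non-smooth boundary
points `p ≠ q`, preserves `{p, q}`, and it is the point reflection through the midpoint
of `[p, q]`, or the reflection across the line `pq`, or the reflection across the
perpendicular bisector of `[p, q]`. -/
theorem stmt_17 (S C₁ C₂ : Set (EuclideanSpace ℝ (Fin 2)))
    (hSc : IsCompact S) (hSint : (interior S).Nonempty)
    (hC₁ : IsClosed C₁) (hC₁conv : Convex ℝ C₁)
    (hC₂ : IsClosed C₂) (hC₂conv : Convex ℝ C₂)
    (hS : S = C₁ ∩ C₂)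
    (p q : EuclideanSpace ℝ (Fin 2)) (hpq : p ≠ q)
    (hns : {x | NonSmoothPt S x} = {p, q})
    (χ : EuclideanSpace ℝ (Fin 2) ≃ᵢ EuclideanSpace ℝ (Fin 2))
    (hχS : χ '' S = S) (hχne : χ ≠ IsometryEquiv.refl _) :
    χ '' {p, q} = {p, q} ∧
    ((∀ x, χ x = (2 : ℝ) • midpoint ℝ p q - x) ∨
      ((∀ x, χ (χ x) = x) ∧ ∀ t : ℝ, χ (p + t • (q - p)) = p + t • (q - p)) ∨
      ((∀ x, χ (χ x) = x) ∧ ∃ w : EuclideanSpace ℝ (Fin 2), w ≠ 0 ∧ ⟪w, q - p⟫ = 0 ∧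
        ∀ t : ℝ, χ (midpoint ℝ p q + t • w) = midpoint ℝ p q + t • w)) := by
  classical
  set L := χ.toRealLinearIsometryEquiv with hLdef
  have hLapp : ∀ x, L x = χ x - χ 0 := fun x => χ.toRealLinearIsometryEquiv_apply x
  have hχapp : ∀ x, χ x = L x + χ 0 := fun x => by rw [hLapp]; abel
  -- frontier is preserved
  have hfr : χ '' frontier S = frontier S := by
    have h := χ.toHomeomorph.image_frontier S
    simpa [hχS] using h
  -- nonsmooth points are preserved
  have hm : ∀ x, NonSmoothPt S x → NonSmoothPt S (χ x) := by
    rintro x ⟨hxf, u, v, huv, hu1, hv1, hu, hv⟩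
    refine ⟨?_, L u, L v, fun h => huv (L.injective h), by simp [hu1], by simp [hv1], ?_, ?_⟩
    · rw [← hfr]; exact Set.mem_image_of_mem _ hxf
    · intro y hy
      obtain ⟨z, hz, rfl⟩ : y ∈ χ '' S := by rw [hχS]; exact hy
      rw [hχapp z, hχapp x, inner_add_left, inner_add_left, L.inner_map_map, L.inner_map_map]
      exact add_le_add (hu z hz) le_rfl
    · intro y hy
      obtain ⟨z, hz, rfl⟩ : y ∈ χ '' S := by rw [hχS]; exact hy
      rw [hχapp z, hχapp x, inner_add_left, inner_add_left, L.inner_map_map, L.inner_map_map]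
      exact add_le_add (hv z hz) le_rfl
  have hpns : NonSmoothPt S p := by
    have : p ∈ {x | NonSmoothPt S x} := by rw [hns]; exact Set.mem_insert _ _
    exact this
  have hqns : NonSmoothPt S q := by
    have : q ∈ {x | NonSmoothPt S x} := by rw [hns]; exact Set.mem_insert_of_mem _ rfl
    exact this
  have hp' : χ p = p ∨ χ p = q := by
    have : χ p ∈ {x | NonSmoothPt S x} := hm p hpns
    rw [hns] at this; simpa using this
  have hq' : χ q = p ∨ χ q = q := by
    have : χ q ∈ {x | NonSmoothPt S x} := hm q hqns
    rw [hns] at this; simpa using this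
  -- the perpendicular vector
  set u : EuclideanSpace ℝ (Fin 2) := q - p with hudef
  have hu : u ≠ 0 := sub_ne_zero.2 (Ne.symm hpq)
  set w : EuclideanSpace ℝ (Fin 2) := (WithLp.equiv 2 (Fin 2 → ℝ)).symm ![-(u 1), u 0] with hwdef
  have hw0 : w 0 = -(u 1) := rfl
  have hw1 : w 1 = u 0 := rfl
  have hw : w ≠ 0 := by
    intro h
    apply hu
    have h0 : w 0 = 0 := by rw [h]; rfl
    have h1 : w 1 = 0 := by rw [h]; rfl
    rw [hw0] at h0; rw [hw1] at h1
    ext i; fin_cases i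
    · simpa using h1
    · simpa using (neg_eq_zero.1 h0)
  have huw : ⟪u, w⟫ = 0 := by rw [aux_inner2, hw0, hw1]; ring
  have hww : ⟪w, w⟫ ≠ 0 := by simpa using (inner_self_ne_zero (𝕜 := ℝ)).2 hw
  have hwqp : ⟪w, q - p⟫ = 0 := by rw [real_inner_comm]; exact huw
  -- general: if L u = ε • u with ε = ±1 then L w = c • w with c = ±1
  have key : ∀ ε : ℝ, (ε = 1 ∨ ε = -1) → L u = ε • u →
      ∃ c : ℝ, (c = 1 ∨ c = -1) ∧ L w = c • w := by
    intro ε hε hLu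
    have hLwu : ⟪L w, u⟫ = 0 := by
      have h1 : ⟪L w, L u⟫ = ⟪w, u⟫ := L.inner_map_map w u
      have hwu : ⟪w, u⟫ = 0 := by rw [real_inner_comm]; exact huw
      rw [hLu, real_inner_smul_right, hwu] at h1
      rcases hε with h | h <;> rw [h] at h1 <;> linarith
    have hdec := aux_decomp u w (L w) hu hw huw
    rw [hLwu, zero_div, zero_smul, zero_add] at hdec
    set c : ℝ := ⟪L w, w⟫ / ⟪w, w⟫ with hc
    refine ⟨c, ?_, hdec⟩
    have h2 : ⟪L w, L w⟫ = ⟪w, w⟫ := L.inner_map_map w w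
    rw [hdec, real_inner_smul_left, real_inner_smul_right] at h2
    have hc2 : c * c = 1 := by
      have h3 : (c * c - 1) * ⟪w, w⟫ = 0 := by linear_combination h2
      rcases mul_eq_zero.1 h3 with h | h
      · linarith
      · exact absurd h hww
    exact mul_self_eq_one_iff.1 hc2
  -- decomposition-based computation of L ∘ L
  have hLL : ∀ (ε c : ℝ), ε * ε = 1 → c * c = 1 → L u = ε • u → L w = c • w →
      ∀ x, L (L x) = x := by
    intro ε c hε hc hLu hLw x
    have hdx := aux_decomp u w x hu hw huw
    have h1 : L x = (⟪x, u⟫ / ⟪u, u⟫) • (ε • u) + (⟪x, w⟫ / ⟪w, w⟫) • (c • w) := by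
      conv_lhs => rw [hdx]
      rw [map_add, map_smul, map_smul, hLu, hLw]
    have h2 : L (L x) = (⟪x, u⟫ / ⟪u, u⟫) • ((ε * ε) • u) + (⟪x, w⟫ / ⟪w, w⟫) • ((c * c) • w) := by
      rw [h1, map_add, map_smul, map_smul, map_smul, map_smul, hLu, hLw]
      module
    rw [h2, hε, hc, one_smul, one_smul, ← hdx]
  -- χ is an involution as soon as L ∘ L = id and χ has a fixed point
  have hinv : ∀ x₀, χ x₀ = x₀ → (∀ x, L (L x) = x) → ∀ x, χ (χ x) = x := by
    intro x₀ hx₀ hLL2 x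
    have hfix : L (χ 0) = -(χ 0) := by
      have h1 : χ 0 = x₀ - L x₀ := by
        have h := hχapp x₀
        rw [hx₀] at h
        linear_combination (norm := module) -h
      rw [h1, map_sub, hLL2]
      module
    rw [hχapp (χ x), hχapp x, map_add, hLL2, hfix]
    abel
  rcases hp' with hP | hP
  · rcases hq' with hQ | hQ
    · exact absurd (χ.injective (hP.trans hQ.symm)) hpq
    · -- χ fixes p and q
      have hLu : L u = (1 : ℝ) • u := by
        rw [one_smul, hudef, map_sub, hLapp q, hLapp p, hP, hQ]
        abel
      obtain ⟨c, hc, hLw⟩ := key 1 (Or.inl rfl) hLu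
      rcases hc with hc | hc
      · -- L = id, so χ = id: contradiction
        exfalso
        apply hχne
        ext x
        have hdx := aux_decomp u w x hu hw huw
        have hLx : L x = x := by
          conv_lhs => rw [hdx]
          rw [map_add, map_smul, map_smul, hLu, hLw, hc, one_smul, one_smul, ← hdx]
        have h0 : χ 0 = 0 := by
          have h := hχapp p
          rw [hP] at h
          have hLp : L p = p := by
            have hdp := aux_decomp u w p hu hw huw
            conv_lhs => rw [hdp]
            rw [map_add, map_smul, map_smul, hLu, hLw, hc, one_smul, one_smul, ← hdp]
          rw [hLp] at h
          linear_combination (norm := module) -h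
        rw [hχapp x, hLx, h0, add_zero]
        rfl
      · -- reflection across line pq
        subst hc
        have hLL2 := hLL 1 (-1) (by ring) (by ring) hLu hLw
        have hinv2 := hinv p hP hLL2
        constructor
        · rw [Set.image_pair, hP, hQ]
        · right; left
          refine ⟨hinv2, fun t => ?_⟩
          rw [hχapp, map_add, map_smul, hLu, hLapp, hP]
          module
  · rcases hq' with hQ | hQ
    · -- χ swaps p and q
      have hLu : L u = (-1 : ℝ) • u := by
        rw [hudef, map_sub, hLapp q, hLapp p, hP, hQ]
        module
      obtain ⟨c, hc, hLw⟩ := key (-1) (Or.inr rfl) hLu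
      have hmid : χ (midpoint ℝ p q) = midpoint ℝ p q := by
        rw [χ.map_midpoint, hP, hQ, midpoint_comm]
      rcases hc with hc | hc
      · -- reflection across perpendicular bisector
        subst hc
        have hLL2 := hLL (-1) 1 (by ring) (by ring) hLu hLw
        have hinv2 := hinv _ hmid hLL2
        constructor
        · rw [Set.image_pair, hP, hQ, Set.pair_comm]
        · right; right
          refine ⟨hinv2, w, hw, hwqp, fun t => ?_⟩
          rw [hχapp, map_add, map_smul, hLw, one_smul, hLapp, hmid]
          module
      · -- point reflection
        subst hc
        constructor
        · rw [Set.image_pair, hP, hQ, Set.pair_comm]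
        · left
          intro x
          have hdx := aux_decomp u w x hu hw huw
          have hLx : L x = -x := by
            conv_lhs => rw [hdx]
            rw [map_add, map_smul, map_smul, hLu, hLw]
            conv_rhs => rw [hdx]
            module
          have h0 : χ 0 = p + q := by
            have := hχapp p
            rw [hP] at this
            have hLp : L p = -p := by
              have hdp := aux_decomp u w p hu hw huw
              conv_lhs => rw [hdp]
              rw [map_add, map_smul, map_smul, hLu, hLw]
              conv_rhs => rw [hdp]
              module
            rw [hLp] at this
            linear_combination (norm := module) -this
          have h2m : (2 : ℝ) • midpoint ℝ p q = p + q := by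
            rw [two_smul]
            exact midpoint_add_self ℝ p q
          rw [hχapp x, hLx, h0, h2m]
          abel
    · exact absurd (χ.injective (hP.trans hQ.symm)) hpq
end
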